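/- arXiv:0711.1143 — 2 statements merged into one kernel-verified Lean document; each statement's English description precedes it below -/
import Mathlib

section
/- Explicit optimal allocation of a selling position under exponential utility: for x ∈ ℝ and Z ∈ L^∞, the optimal intertemporal allocation (X_t)_{t∈𝕋} ∈ A(x − Z) of x − Z (the element of A(x − Z) with ∑_{t∈𝕋} E[u_t(X̃_t)] = U(x − Z)) is given by X_1 = (B_1/α_1)[β_1 x − log L_1(α, −Z)] and, for t = 2,...,T, X_t = (B_t/α_t)[β_1 x − log L_t(α, −Z) + ∑_{k=1}^{t−1} (β_{k+1}/α_k)·log L_k(α, −Z)]. -/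
open MeasureTheory Finset Real

noncomputable section

/-- `A(W)`: the set of admissible intertemporal allocations of the risk `W`:
adapted processes `(Y_t)_{t∈𝕋}` with each `Y_t` essentially bounded and
`∑_{t∈𝕋} Y_t/B_t = W` a.s. -/
def IsAlloc {Ω : Type*} [mΩ : MeasurableSpace Ω] (μ : Measure Ω) (T : ℕ)
    (ℱ : ℕ → MeasurableSpace Ω) (B : ℕ → Ω → ℝ) (W : Ω → ℝ) (Y : ℕ → Ω → ℝ) : Prop :=
  (∀ t ∈ Finset.Icc 1 T, Measurable[ℱ t] (Y t) ∧ ∃ C : ℝ, ∀ᵐ ω ∂μ, |Y t ω| ≤ C) ∧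
  ∀ᵐ ω ∂μ, ∑ t ∈ Finset.Icc 1 T, Y t ω / B t ω = W ω

/-- The integrated expected utility `∑_{t∈𝕋} E[u_t(Ỹ_t)]` of an allocation. -/
def allocVal {Ω : Type*} [mΩ : MeasurableSpace Ω] (μ : Measure Ω) (T : ℕ)
    (u : ℕ → ℝ → ℝ) (B : ℕ → Ω → ℝ) (Y : ℕ → Ω → ℝ) : ℝ :=
  ∑ t ∈ Finset.Icc 1 T, ∫ ω, u t (Y t ω / B t ω) ∂μ

/-- The utility functional `U(W) = sup { ∑_t E[u_t(Ỹ_t)] : Y ∈ A(W) }`. -/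
def Util {Ω : Type*} [mΩ : MeasurableSpace Ω] (μ : Measure Ω) (T : ℕ)
    (ℱ : ℕ → MeasurableSpace Ω) (u : ℕ → ℝ → ℝ) (B : ℕ → Ω → ℝ) (W : Ω → ℝ) : ℝ :=
  sSup {s : ℝ | ∃ Y, IsAlloc μ T ℱ B W Y ∧ s = allocVal μ T u B Y}
section AuxiliaryHelpers

lemma exp_taylor_nonneg (w : ℝ) : 0 ≤ Real.exp w - 1 - w := by
  nlinarith [Real.add_one_le_exp w]

lemma exp_taylor_eq_zero {w : ℝ} (h : Real.exp w - 1 - w = 0) : w = 0 := by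
  by_contra hw
  nlinarith [Real.add_one_lt_exp hw]

lemma tangent_ineq {a y z : ℝ} (ha : 0 < a) :
    (1/a) * (1 - Real.exp (-a*y)) ≤ (1/a) * (1 - Real.exp (-a*z)) + Real.exp (-a*z) * (y - z) := by
  have h := exp_taylor_nonneg (-a*(y-z))
  have he : Real.exp (-a*y) = Real.exp (-a*z) * Real.exp (-a*(y-z)) := by
    rw [← Real.exp_add]; ring_nf
  have hez : 0 < Real.exp (-a*z) := Real.exp_pos _
  have key : 0 ≤ Real.exp (-a*z) * (Real.exp (-a*(y-z)) - 1 - (-a*(y-z))) := mul_nonneg hez.le h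
  rw [he]
  rw [div_mul_eq_mul_div, div_mul_eq_mul_div, div_add' _ _ _ (ne_of_gt ha),
    div_le_div_iff₀ ha ha]
  nlinarith [key]

lemma tangent_eq {a y z : ℝ} (ha : 0 < a)
    (h : (1/a) * (1 - Real.exp (-a*y)) = (1/a) * (1 - Real.exp (-a*z)) + Real.exp (-a*z) * (y - z)) :
    y = z := by
  have hw : Real.exp (-a*(y-z)) - 1 - (-a*(y-z)) = 0 := by
    have h' := h
    field_simp at h'
    have he2 : Real.exp (-(a*y)) = Real.exp (-(a*z)) * Real.exp (-a*(y-z)) := by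
      rw [← Real.exp_add]; ring_nf
    rw [he2] at h'
    have h2 : Real.exp (-(a*z)) * (Real.exp (-a*(y-z)) - 1 - (-a*(y-z))) = 0 := by
      linear_combination -h'
    rcases mul_eq_zero.mp h2 with h'' | h''
    · exact absurd h'' (Real.exp_pos _).ne'
    · exact h''
  have h0 := exp_taylor_eq_zero hw
  have : a * (y - z) = 0 := by linarith
  rcases mul_eq_zero.mp this with h' | h'
  · exact absurd h' (ne_of_gt ha)
  · linarith

lemma rpow_mem_bounds {a b v z : ℝ} (ha : 0 < a) (h1 : a ≤ v) (h2 : v ≤ b) :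
    min (a ^ z) (b ^ z) ≤ v ^ z ∧ v ^ z ≤ max (a ^ z) (b ^ z) := by
  have hv : 0 < v := ha.trans_le h1
  have hb : 0 < b := hv.trans_le h2
  rcases le_or_gt 0 z with hz | hz
  · exact ⟨le_trans (min_le_left _ _) (Real.rpow_le_rpow ha.le h1 hz),
      le_trans (Real.rpow_le_rpow hv.le h2 hz) (le_max_right _ _)⟩
  · have hz' : 0 ≤ -z := by linarith
    have e1 : v ^ z = (v ^ (-z))⁻¹ := by rw [← Real.rpow_neg hv.le]; ring_nf
    have e2 : a ^ z = (a ^ (-z))⁻¹ := by rw [← Real.rpow_neg ha.le]; ring_nf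
    have e3 : b ^ z = (b ^ (-z))⁻¹ := by rw [← Real.rpow_neg hb.le]; ring_nf
    have p1 : 0 < a ^ (-z) := Real.rpow_pos_of_pos ha _
    have p2 : 0 < v ^ (-z) := Real.rpow_pos_of_pos hv _
    constructor
    · refine le_trans (min_le_right _ _) ?_
      rw [e1, e3]
      exact inv_anti₀ p2 (Real.rpow_le_rpow hv.le h2 hz')
    · refine le_trans ?_ (le_max_left _ _)
      rw [e1, e2]
      exact inv_anti₀ p1 (Real.rpow_le_rpow ha.le h1 hz')

lemma abs_le_max_abs {m Mb v : ℝ} (h1 : m ≤ v) (h2 : v ≤ Mb) : |v| ≤ max |m| |Mb| := by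
  rcases abs_cases v with ⟨hv, _⟩ | ⟨hv, _⟩
  · rw [hv]; exact le_trans (le_trans h2 (le_abs_self Mb)) (le_max_right _ _)
  · rw [hv]; refine le_trans ?_ (le_max_left _ _)
    have := neg_abs_le m; linarith

variable {Ω : Type*} [mΩ : MeasurableSpace Ω]

lemma bdd_meas_integrable' {μ : Measure Ω} [IsFiniteMeasure μ] {f : Ω → ℝ}
    (hf : AEStronglyMeasurable f μ) {C : ℝ}
    (h : ∀ᵐ ω ∂μ, |f ω| ≤ C) : Integrable f μ :=
  (integrable_const C).mono' hf (by filter_upwards [h] with ω hω; simpa using hω)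

lemma condexp_bounds {μ : Measure Ω} [IsProbabilityMeasure μ] {m : MeasurableSpace Ω}
    (hm : m ≤ mΩ) {f : Ω → ℝ} (hfint : Integrable f μ) {a b : ℝ}
    (hab : ∀ᵐ ω ∂μ, a ≤ f ω ∧ f ω ≤ b) :
    ∀ᵐ ω ∂μ, a ≤ (μ[f|m]) ω ∧ (μ[f|m]) ω ≤ b := by
  have h1 := condExp_mono (μ := μ) (m := m) (integrable_const a) hfint
    (by filter_upwards [hab] with ω h using h.1)
  have h2 := condExp_mono (μ := μ) (m := m) hfint (integrable_const b)
    (by filter_upwards [hab] with ω h using h.2)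
  rw [condExp_const hm] at h1 h2
  filter_upwards [h1, h2] with ω e1 e2
  exact ⟨e1, e2⟩

/-- The measurable version of the process `L_t(α, -Z)`, built by backward recursion,
indexed by the number of steps back from `T`. -/
noncomputable def Lp0 (μ : Measure Ω) (T : ℕ) (ℱ : ℕ → MeasurableSpace Ω)
    (α β : ℕ → ℝ) (Z : Ω → ℝ) : ℕ → Ω → ℝ
  | 0 => fun ω => Real.exp (α T * Z ω)
  | (s+1) => fun ω => ((μ[Lp0 μ T ℱ α β Z s | ℱ (T - (s+1))]) ω) ^ (β (T - (s+1)) / β (T - s))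

/-- The process `L_t(α, -Z)` (measurable version). -/
noncomputable def Ld (μ : Measure Ω) (T : ℕ) (ℱ : ℕ → MeasurableSpace Ω)
    (α β : ℕ → ℝ) (Z : Ω → ℝ) (t : ℕ) : Ω → ℝ := Lp0 μ T ℱ α β Z (T - t)

lemma Ld_T (μ : Measure Ω) (T : ℕ) (ℱ : ℕ → MeasurableSpace Ω)
    (α β : ℕ → ℝ) (Z : Ω → ℝ) :
    Ld μ T ℱ α β Z T = fun ω => Real.exp (α T * Z ω) := by
  unfold Ld
  rw [Nat.sub_self]
  rfl

lemma Ld_step (μ : Measure Ω) (T : ℕ) (ℱ : ℕ → MeasurableSpace Ω)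
    (α β : ℕ → ℝ) (Z : Ω → ℝ) {t : ℕ} (h1 : 1 ≤ t) (h2 : t ≤ T) :
    Ld μ T ℱ α β Z (t-1)
      = fun ω => ((μ[Ld μ T ℱ α β Z t | ℱ (t-1)]) ω) ^ (β (t-1) / β t) := by
  unfold Ld
  have e1 : T - (t-1) = (T - t) + 1 := by omega
  have e2 : T - ((T-t)+1) = t - 1 := by omega
  have e3 : T - (T-t) = t := by omega
  rw [e1]
  show (fun ω => ((μ[Lp0 μ T ℱ α β Z (T-t) | ℱ (T - ((T-t)+1))]) ω)
      ^ (β (T - ((T-t)+1)) / β (T - (T-t)))) = _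
  rw [e2, e3]

lemma Ld_props (μ : Measure Ω) [IsProbabilityMeasure μ] (T : ℕ)
    (ℱ : ℕ → MeasurableSpace Ω) (hℱle : ∀ t, ℱ t ≤ mΩ)
    (α β : ℕ → ℝ) (Z : Ω → ℝ) (hZmeas : Measurable[ℱ T] Z) (CZ : ℝ)
    (hCZ : ∀ᵐ ω ∂μ, |Z ω| ≤ CZ) :
    ∀ t, 1 ≤ t → t ≤ T →
      StronglyMeasurable[ℱ t] (Ld μ T ℱ α β Z t) ∧
      ∃ m Mb : ℝ, 0 < m ∧ ∀ᵐ ω ∂μ, m ≤ Ld μ T ℱ α β Z t ω ∧ Ld μ T ℱ α β Z t ω ≤ Mb := by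
  suffices H : ∀ k t, t = T - k → 1 ≤ t → t ≤ T →
      StronglyMeasurable[ℱ t] (Ld μ T ℱ α β Z t) ∧
      ∃ m Mb : ℝ, 0 < m ∧ ∀ᵐ ω ∂μ, m ≤ Ld μ T ℱ α β Z t ω ∧ Ld μ T ℱ α β Z t ω ≤ Mb by
    intro t h1 h2; exact H (T - t) t (by omega) h1 h2
  intro k
  induction k with
  | zero =>
    intro t ht h1 h2
    have hts : t = T := by omega
    subst hts
    rw [Ld_T]
    constructor
    · exact ((measurable_const.mul hZmeas).exp).stronglyMeasurable
    · refine ⟨Real.exp (-(|α t| * CZ)), Real.exp (|α t| * CZ), Real.exp_pos _, ?_⟩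
      filter_upwards [hCZ] with ω hω
      have habs : |α t * Z ω| ≤ |α t| * CZ := by
        rw [abs_mul]
        exact mul_le_mul_of_nonneg_left hω (abs_nonneg _)
      rw [abs_le] at habs
      exact ⟨Real.exp_le_exp.mpr habs.1, Real.exp_le_exp.mpr habs.2⟩
  | succ k ih =>
    intro t ht h1 h2
    have h2' : t + 1 ≤ T := by omega
    obtain ⟨hmeas, m, Mb, hm, hbd⟩ := ih (t+1) (by omega) (by omega) h2'
    have hstep := Ld_step μ T ℱ α β Z (t := t+1) (by omega) h2'
    simp only [Nat.add_sub_cancel] at hstep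
    have hint : Integrable (Ld μ T ℱ α β Z (t+1)) μ :=
      bdd_meas_integrable' ((hmeas.mono (hℱle _)).aestronglyMeasurable)
        (by filter_upwards [hbd] with ω h; exact abs_le_max_abs h.1 h.2)
    have hcb := condexp_bounds (hℱle t) hint hbd
    have hmMb : m ≤ Mb := by
      have hne : (MeasureTheory.ae μ).NeBot := ae_neBot.mpr (IsProbabilityMeasure.ne_zero μ)
      obtain ⟨ω, hω⟩ := hbd.exists
      linarith [hω.1, hω.2]
    constructor
    · rw [hstep]
      exact ((stronglyMeasurable_condExp.measurable.pow measurable_const)).stronglyMeasurable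
    · refine ⟨min (m ^ (β t / β (t+1))) (Mb ^ (β t / β (t+1))),
        max (m ^ (β t / β (t+1))) (Mb ^ (β t / β (t+1))),
        lt_min (Real.rpow_pos_of_pos hm _) (Real.rpow_pos_of_pos (lt_of_lt_of_le hm hmMb) _), ?_⟩
      rw [hstep]
      filter_upwards [hcb] with ω hω
      exact rpow_mem_bounds hm hω.1 hω.2

lemma alloc_sum_identity (T : ℕ) (hT : 1 ≤ T) (α β : ℕ → ℝ)
    (hα : ∀ t ∈ Finset.Icc 1 T, 0 < α t)
    (hβ : ∀ t ∈ Finset.Icc 1 T, 1 / β t = ∑ k ∈ Finset.Icc t T, 1 / α k)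
    (hβpos : ∀ t ∈ Finset.Icc 1 T, 0 < β t)
    (x : ℝ) (ℓ : ℕ → ℝ) :
    ∑ t ∈ Finset.Icc 1 T, (1 / α t) *
        (β 1 * x - ℓ t + ∑ k ∈ Finset.Icc 1 (t-1), (β (k+1) / α k) * ℓ k)
      = x - ℓ T / α T := by
  have h1T : (1:ℕ) ∈ Finset.Icc 1 T := by simp [hT]
  have hTT : T ∈ Finset.Icc 1 T := by simp [hT]
  have step1 : ∀ t ∈ Finset.Icc 1 T,
      (1/α t) * (β 1 * x - ℓ t + ∑ k ∈ Finset.Icc 1 (t-1), (β (k+1)/α k) * ℓ k)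
        = (1/α t) * (β 1 * x) - ℓ t / α t
          + ∑ k ∈ Finset.Icc 1 (t-1), (1/α t) * ((β (k+1)/α k) * ℓ k) := by
    intro t ht; rw [mul_add, Finset.mul_sum]; ring
  rw [Finset.sum_congr rfl step1, Finset.sum_add_distrib, Finset.sum_sub_distrib]
  rw [Finset.sum_comm' (t' := Finset.Icc 1 T) (s' := fun k => Finset.Icc (k+1) T)
    (by intro t k; simp only [Finset.mem_Icc]; omega)]
  have hsum1 : ∑ t ∈ Finset.Icc 1 T, (1/α t) * (β 1 * x) = x := by
    rw [← Finset.sum_mul, ← hβ 1 h1T]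
    field_simp [(hβpos 1 h1T).ne']
  rw [hsum1]
  have hcomb : ∑ k ∈ Finset.Icc 1 T, (∑ t ∈ Finset.Icc (k+1) T, (1/α t) * ((β (k+1)/α k) * ℓ k))
      - ∑ k ∈ Finset.Icc 1 T, ℓ k / α k = - (ℓ T / α T) := by
    rw [← Finset.sum_sub_distrib]
    rw [Finset.sum_eq_single_of_mem T hTT ?_]
    · rw [show Finset.Icc (T+1) T = ∅ from Finset.Icc_eq_empty (by omega), Finset.sum_empty]
      ring
    · intro k hk hkT
      have hk' : k + 1 ∈ Finset.Icc 1 T := by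
        simp only [Finset.mem_Icc] at hk ⊢; omega
      have hswap : ∑ t ∈ Finset.Icc (k+1) T, (1/α t) * ((β (k+1)/α k) * ℓ k)
          = ((β (k+1)/α k) * ℓ k) * ∑ t ∈ Finset.Icc (k+1) T, (1/α t) := by
        rw [Finset.mul_sum]
        exact Finset.sum_congr rfl (fun t _ => mul_comm _ _)
      rw [hswap, ← hβ (k+1) hk']
      have hαk : α k ≠ 0 := by
        refine (hα k ?_).ne'
        simp only [Finset.mem_Icc] at hk ⊢; omega
      have hβk : β (k+1) ≠ 0 := (hβpos (k+1) hk').ne'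
      field_simp
      ring
  linarith [hcomb]

end AuxiliaryHelpers

/-- Explicit optimal allocation of the position `x - Z` under exponential utility
(Proposition 3.5). -/
theorem exponential_optimal_allocation_of_selling_position
    {Ω : Type*} [mΩ : MeasurableSpace Ω] (μ : Measure Ω) [IsProbabilityMeasure μ]
    (T : ℕ) (hT : 1 ≤ T)
    (ℱ : ℕ → MeasurableSpace Ω) (hℱmono : Monotone ℱ) (hℱle : ∀ t, ℱ t ≤ mΩ)
    (r : ℕ → Ω → ℝ)
    (hr_meas : ∀ t ∈ Finset.Icc 1 T, Measurable[ℱ (t - 1)] (r t))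
    (hr_nonneg : ∀ t ∈ Finset.Icc 1 T, ∀ ω, 0 ≤ r t ω)
    (hr_bdd : ∀ t ∈ Finset.Icc 1 T, ∃ C : ℝ, ∀ ω, r t ω ≤ C)
    (B : ℕ → Ω → ℝ) (hB : ∀ t ω, B t ω = ∏ k ∈ Finset.Icc 1 t, (1 + r k ω))
    (α β : ℕ → ℝ) (hα : ∀ t ∈ Finset.Icc 1 T, 0 < α t)
    (hβ : ∀ t ∈ Finset.Icc 1 T, 1 / β t = ∑ k ∈ Finset.Icc t T, 1 / α k)
    (u : ℕ → ℝ → ℝ)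
    (hu : ∀ t x, u t x = (1 / α t) * (1 - Real.exp (-(α t) * x)))
    (x : ℝ) (Z : Ω → ℝ)
    (hZmeas : Measurable[ℱ T] Z) (hZbdd : ∃ C : ℝ, ∀ᵐ ω ∂μ, |Z ω| ≤ C)
    (LnZ : ℕ → Ω → ℝ)
    -- `LnZ` is the process `(L_t(α, -Z))`
    (hLnZT : LnZ T =ᵐ[μ] fun ω => Real.exp (-(α T) * (-Z ω)))
    (hLnZstep : ∀ t ∈ Finset.Icc 2 T,
      LnZ (t - 1) =ᵐ[μ] fun ω => ((μ[LnZ t | ℱ (t - 1)]) ω) ^ (β (t - 1) / β t))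
    (X : ℕ → Ω → ℝ)
    (hX : IsAlloc μ T ℱ B (fun ω => x - Z ω) X)
    (hXopt : ∀ Y, IsAlloc μ T ℱ B (fun ω => x - Z ω) Y →
      allocVal μ T u B Y ≤ allocVal μ T u B X) :
    (∀ᵐ ω ∂μ, X 1 ω = (B 1 ω / α 1) * (β 1 * x - Real.log (LnZ 1 ω))) ∧
    (∀ t ∈ Finset.Icc 2 T, ∀ᵐ ω ∂μ,
      X t ω = (B t ω / α t) *
        (β 1 * x - Real.log (LnZ t ω) +
          ∑ k ∈ Finset.Icc 1 (t - 1), (β (k + 1) / α k) * Real.log (LnZ k ω))) := by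

  classical
  obtain ⟨CZ, hCZ⟩ := hZbdd
  haveI hNB : (MeasureTheory.ae μ).NeBot := ae_neBot.mpr (IsProbabilityMeasure.ne_zero μ)
  have h1T : (1:ℕ) ∈ Finset.Icc 1 T := by simp [hT]
  have hTT : T ∈ Finset.Icc 1 T := by simp [hT]
  have hβpos : ∀ t ∈ Finset.Icc 1 T, 0 < β t := by
    intro t ht
    simp only [Finset.mem_Icc] at ht
    refine one_div_pos.mp ?_
    rw [hβ t (by simp only [Finset.mem_Icc]; omega)]
    refine Finset.sum_pos (fun k hk => ?_) ⟨t, by simp only [Finset.mem_Icc]; omega⟩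
    simp only [Finset.mem_Icc] at hk
    exact one_div_pos.mpr (hα k (by simp only [Finset.mem_Icc]; omega))
  have hβrec : ∀ t, 2 ≤ t → t ≤ T → 1 / β (t-1) = 1 / α (t-1) + 1 / β t := by
    intro t h2 hTt
    rw [hβ (t-1) (by simp only [Finset.mem_Icc]; omega),
      hβ t (by simp only [Finset.mem_Icc]; omega)]
    rw [show Finset.Icc (t-1) T = insert (t-1) (Finset.Icc t T) by
      ext k; simp only [Finset.mem_Icc, Finset.mem_insert]; omega]
    rw [Finset.sum_insert (by simp only [Finset.mem_Icc]; omega)]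
  set L : ℕ → Ω → ℝ := Ld μ T ℱ α β Z with hLdef
  have hLprops := Ld_props μ T ℱ hℱle α β Z hZmeas CZ hCZ
  have hLex : ∀ t, ∃ m Mb : ℝ, 1 ≤ t → t ≤ T →
      0 < m ∧ ∀ᵐ ω ∂μ, m ≤ L t ω ∧ L t ω ≤ Mb := by
    intro t
    by_cases h : 1 ≤ t ∧ t ≤ T
    · obtain ⟨_, m, Mb, hm, hbd⟩ := hLprops t h.1 h.2
      exact ⟨m, Mb, fun _ _ => ⟨hm, hbd⟩⟩
    · exact ⟨1, 1, fun h1 h2 => absurd ⟨h1, h2⟩ h⟩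
  choose mm MM hmm using hLex
  have hLmeas : ∀ t, 1 ≤ t → t ≤ T → StronglyMeasurable[ℱ t] (L t) :=
    fun t a b => (hLprops t a b).1
  have hLglob : ∀ᵐ ω ∂μ, ∀ t, 1 ≤ t → t ≤ T → mm t ≤ L t ω ∧ L t ω ≤ MM t := by
    rw [MeasureTheory.ae_all_iff]
    intro t
    by_cases h : 1 ≤ t ∧ t ≤ T
    · filter_upwards [(hmm t h.1 h.2).2] with ω h' _ _; exact h'
    · filter_upwards with ω h1 h2; exact absurd ⟨h1, h2⟩ h
  have hLint : ∀ t, 1 ≤ t → t ≤ T → Integrable (L t) μ := fun t a b =>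
    bdd_meas_integrable' (((hLmeas t a b).mono (hℱle t)).aestronglyMeasurable)
      (by filter_upwards [(hmm t a b).2] with ω h; exact abs_le_max_abs h.1 h.2)
  have hcondL : ∀ t, 2 ≤ t → t ≤ T →
      (μ[L t | ℱ (t-1)]) =ᵐ[μ] fun ω => (L (t-1) ω) ^ (β t / β (t-1)) := by
    intro t h2 hTt
    have h1t : 1 ≤ t := by omega
    have hcb := condexp_bounds (hℱle (t-1)) (hLint t h1t hTt) (hmm t h1t hTt).2
    have hstep : L (t-1) = fun ω => ((μ[L t | ℱ (t-1)]) ω) ^ (β (t-1) / β t) := by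
      rw [hLdef]; exact Ld_step μ T ℱ α β Z h1t hTt
    have hb1 : β t ≠ 0 := (hβpos t (by simp only [Finset.mem_Icc]; omega)).ne'
    have hb2 : β (t-1) ≠ 0 := (hβpos (t-1) (by simp only [Finset.mem_Icc]; omega)).ne'
    filter_upwards [hcb] with ω hω
    have hc : 0 < (μ[L t | ℱ (t-1)]) ω := lt_of_lt_of_le (hmm t h1t hTt).1 hω.1
    have hptw := congrFun hstep ω
    rw [hptw, ← Real.rpow_mul hc.le,
      show (β (t-1)/β t) * (β t/β (t-1)) = 1 by field_simp, Real.rpow_one]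
  have hLnZae : ∀ t, 1 ≤ t → t ≤ T → LnZ t =ᵐ[μ] L t := by
    suffices H : ∀ k t, t = T - k → 1 ≤ t → t ≤ T → LnZ t =ᵐ[μ] L t by
      intro t h1 h2; exact H (T - t) t (by omega) h1 h2
    intro k
    induction k with
    | zero =>
      intro t ht h1 h2
      have hts : t = T := by omega
      subst hts
      have hLT := congrFun (Ld_T μ t ℱ α β Z)
      filter_upwards [hLnZT] with ω hω
      rw [hω, hLdef, hLT ω]
      congr 1
      ring
    | succ k ih =>
      intro t ht h1 h2
      have h2' : t + 1 ≤ T := by omega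
      have ihe := ih (t+1) (by omega) (by omega) h2'
      have hst := hLnZstep (t+1) (by simp only [Finset.mem_Icc]; omega)
      simp only [Nat.add_sub_cancel] at hst
      have hce : μ[LnZ (t+1) | ℱ t] =ᵐ[μ] μ[L (t+1) | ℱ t] := condExp_congr_ae ihe
      have hstep : L t = fun ω => ((μ[L (t+1) | ℱ t]) ω) ^ (β t / β (t+1)) := by
        have h' := Ld_step μ T ℱ α β Z (t := t+1) (by omega) h2'
        simp only [Nat.add_sub_cancel] at h'
        rw [hLdef]; exact h'
      filter_upwards [hst, hce] with ω hω1 hω2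
      have hptw := congrFun hstep ω
      rw [hω1, hω2, hptw]
  have hBge1 : ∀ t, t ≤ T → ∀ ω, (1:ℝ) ≤ B t ω := by
    intro t htT ω
    rw [hB]
    calc (1:ℝ) = ∏ _k ∈ Finset.Icc 1 t, (1:ℝ) := (Finset.prod_const_one).symm
      _ ≤ ∏ k ∈ Finset.Icc 1 t, (1 + r k ω) := by
          refine Finset.prod_le_prod (fun k hk => by norm_num) (fun k hk => ?_)
          simp only [Finset.mem_Icc] at hk
          have := hr_nonneg k (by simp only [Finset.mem_Icc]; omega) ω
          linarith
  have hBne : ∀ t, t ≤ T → ∀ ω, B t ω ≠ 0 := by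
    intro t htT ω
    have h1 := hBge1 t htT ω
    intro h
    rw [h] at h1
    linarith
  have hBmeas : ∀ t, t ≤ T → Measurable[ℱ t] (B t) := by
    intro t htT
    have hBf : B t = fun ω => ∏ k ∈ Finset.Icc 1 t, (1 + r k ω) := funext fun ω => hB t ω
    rw [hBf]
    refine Finset.measurable_prod _ (fun k hk => ?_)
    simp only [Finset.mem_Icc] at hk
    exact measurable_const.add ((hr_meas k (by simp only [Finset.mem_Icc]; omega)).mono
      (hℱmono (by omega : k - 1 ≤ t)) le_rfl)
  have hBbdd : ∀ t, t ≤ T → ∃ C : ℝ, ∀ ω, |B t ω| ≤ C := by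
    choose D hD using hr_bdd
    intro t htT
    refine ⟨∏ k ∈ Finset.Icc 1 t,
      (if h : k ∈ Finset.Icc 1 T then 1 + max (D k h) 0 else 1), fun ω => ?_⟩
    rw [abs_of_nonneg (by linarith [hBge1 t htT ω]), hB]
    refine Finset.prod_le_prod (fun k hk => ?_) (fun k hk => ?_)
    · simp only [Finset.mem_Icc] at hk
      have := hr_nonneg k (by simp only [Finset.mem_Icc]; omega) ω; linarith
    · simp only [Finset.mem_Icc] at hk
      have hkT : k ∈ Finset.Icc 1 T := by simp only [Finset.mem_Icc]; omega
      rw [dif_pos hkT]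
      have h1 := hD k hkT ω
      have h2 := le_max_left (D k hkT) (0:ℝ)
      linarith
  set Xs : ℕ → Ω → ℝ := fun t ω => (B t ω / α t) *
      (β 1 * x - Real.log (L t ω)
        + ∑ k ∈ Finset.Icc 1 (t-1), (β (k+1) / α k) * Real.log (L k ω)) with hXsdef
  set M : ℕ → Ω → ℝ := fun t ω => Real.exp (-(β 1 * x)) * L t ω *
      ∏ k ∈ Finset.Icc 1 (t-1), (L k ω) ^ (-(β (k+1) / α k)) with hMdef
  have hXsdiv : ∀ t, 1 ≤ t → t ≤ T → ∀ ω, Xs t ω / B t ω = (1 / α t) *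
      (β 1 * x - Real.log (L t ω)
        + ∑ k ∈ Finset.Icc 1 (t-1), (β (k+1) / α k) * Real.log (L k ω)) := by
    intro t ht1 ht2 ω
    rw [hXsdef]
    simp only
    have hb := hBne t ht2 ω
    have ha := (hα t (by simp only [Finset.mem_Icc]; omega)).ne'
    field_simp
  have hXssum : ∀ ω, ∑ t ∈ Finset.Icc 1 T, Xs t ω / B t ω = x - Z ω := by
    intro ω
    have hid := alloc_sum_identity T hT α β hα hβ hβpos x (fun k => Real.log (L k ω))
    rw [Finset.sum_congr rfl (fun t ht => by
      simp only [Finset.mem_Icc] at ht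
      exact hXsdiv t ht.1 ht.2 ω), hid]
    have hLT : L T ω = Real.exp (α T * Z ω) := congrFun (Ld_T μ T ℱ α β Z) ω
    rw [hLT, Real.log_exp, mul_div_cancel_left₀ _ (hα T hTT).ne']
  have hlogmeas : ∀ k, 1 ≤ k → k ≤ T → Measurable[ℱ k] fun ω => Real.log (L k ω) :=
    fun k a b => (hLmeas k a b).measurable.log
  have hXsmeas : ∀ t, 1 ≤ t → t ≤ T → Measurable[ℱ t] (Xs t) := by
    intro t ht1 ht2
    rw [hXsdef]
    refine Measurable.mul ((hBmeas t ht2).div_const _) ?_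
    refine Measurable.add (Measurable.sub measurable_const (hlogmeas t ht1 ht2)) ?_
    refine Finset.measurable_sum _ (fun k hk => ?_)
    simp only [Finset.mem_Icc] at hk
    exact measurable_const.mul
      (((hlogmeas k hk.1 (by omega)).mono (hℱmono (by omega : k ≤ t)) le_rfl))
  set Kl : ℕ → ℝ := fun t => max |Real.log (mm t)| |Real.log (MM t)| with hKldef
  set KA : ℕ → ℝ := fun t =>
    |β 1 * x| + Kl t + ∑ k ∈ Finset.Icc 1 (t-1), |β (k+1) / α k| * Kl k with hKAdef
  have hlbd : ∀ᵐ ω ∂μ, ∀ t, 1 ≤ t → t ≤ T → |Real.log (L t ω)| ≤ Kl t := by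
    filter_upwards [hLglob] with ω hω t ht1 ht2
    obtain ⟨hlo, hhi⟩ := hω t ht1 ht2
    have hm := (hmm t ht1 ht2).1
    exact abs_le_max_abs (Real.log_le_log hm hlo)
      (Real.log_le_log (lt_of_lt_of_le hm hlo) hhi)
  have hXst_bd : ∀ᵐ ω ∂μ, ∀ t, 1 ≤ t → t ≤ T →
      |Xs t ω / B t ω| ≤ (1 / α t) * KA t := by
    filter_upwards [hlbd] with ω hω t ht1 ht2
    rw [hXsdiv t ht1 ht2 ω, abs_mul]
    have hat := hα t (by simp only [Finset.mem_Icc]; omega)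
    rw [abs_of_pos (one_div_pos.mpr hat)]
    refine mul_le_mul_of_nonneg_left ?_ (le_of_lt (one_div_pos.mpr hat))
    have h1 : |β 1 * x - Real.log (L t ω)
        + ∑ k ∈ Finset.Icc 1 (t-1), (β (k+1) / α k) * Real.log (L k ω)|
        ≤ |β 1 * x| + |Real.log (L t ω)|
          + |∑ k ∈ Finset.Icc 1 (t-1), (β (k+1) / α k) * Real.log (L k ω)| := by
      calc |β 1 * x - Real.log (L t ω) + _| ≤ |β 1 * x - Real.log (L t ω)| + _ := abs_add_le _ _
        _ ≤ _ := by
          have : |β 1 * x - Real.log (L t ω)| ≤ |β 1 * x| + |Real.log (L t ω)| := by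
            rw [sub_eq_add_neg]
            exact le_trans (abs_add_le _ _) (by rw [abs_neg])
          linarith
    have h2 : |∑ k ∈ Finset.Icc 1 (t-1), (β (k+1) / α k) * Real.log (L k ω)|
        ≤ ∑ k ∈ Finset.Icc 1 (t-1), |β (k+1) / α k| * Kl k := by
      refine le_trans (Finset.abs_sum_le_sum_abs _ _) (Finset.sum_le_sum (fun k hk => ?_))
      simp only [Finset.mem_Icc] at hk
      rw [abs_mul]
      exact mul_le_mul_of_nonneg_left (hω k hk.1 (by omega)) (abs_nonneg _)
    rw [hKAdef]
    simp only
    linarith [hω t ht1 ht2]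
  have hXsbd : ∀ t, 1 ≤ t → t ≤ T → ∃ C, ∀ᵐ ω ∂μ, |Xs t ω| ≤ C := by
    intro t ht1 ht2
    obtain ⟨CBt, hCBt⟩ := hBbdd t ht2
    refine ⟨CBt * ((1 / α t) * KA t), ?_⟩
    filter_upwards [hXst_bd] with ω hω
    have h3 := hω t ht1 ht2
    have h4 : Xs t ω = B t ω * (Xs t ω / B t ω) := by
      rw [mul_comm, div_mul_cancel₀ _ (hBne t ht2 ω)]
    rw [h4, abs_mul]
    exact mul_le_mul (hCBt ω) h3 (abs_nonneg _) ((abs_nonneg _).trans (hCBt ω))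
  have hXsAlloc : IsAlloc μ T ℱ B (fun ω => x - Z ω) Xs := by
    constructor
    · intro t ht
      simp only [Finset.mem_Icc] at ht
      exact ⟨hXsmeas t ht.1 ht.2, hXsbd t ht.1 ht.2⟩
    · exact Filter.Eventually.of_forall hXssum
  have hMexp : ∀ t, 1 ≤ t → t ≤ T → ∀ᵐ ω ∂μ,
      M t ω = Real.exp (-(α t) * (Xs t ω / B t ω)) := by
    intro t ht1 ht2
    filter_upwards [hLglob] with ω hω
    rw [hXsdiv t ht1 ht2 ω]
    have hat := (hα t (by simp only [Finset.mem_Icc]; omega)).ne'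
    rw [show -(α t) * ((1 / α t) * (β 1 * x - Real.log (L t ω)
        + ∑ k ∈ Finset.Icc 1 (t-1), (β (k+1) / α k) * Real.log (L k ω)))
      = -(β 1 * x) + (Real.log (L t ω)
        + (∑ k ∈ Finset.Icc 1 (t-1), -((β (k+1) / α k) * Real.log (L k ω)))) from by
        rw [Finset.sum_neg_distrib]
        field_simp
        ring]
    rw [Real.exp_add, Real.exp_add, Real.exp_sum]
    rw [hMdef]
    simp only
    rw [mul_assoc]
    congr 1
    congr 1
    · exact (Real.exp_log (lt_of_lt_of_le (hmm t ht1 ht2).1 (hω t ht1 ht2).1)).symm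
    · refine Finset.prod_congr rfl (fun k hk => ?_)
      simp only [Finset.mem_Icc] at hk
      have hpos : 0 < L k ω :=
        lt_of_lt_of_le (hmm k hk.1 (by omega)).1 (hω k hk.1 (by omega)).1
      rw [Real.rpow_def_of_pos hpos]
      congr 1
      ring
  have hMmeas : ∀ t, 1 ≤ t → t ≤ T → Measurable[ℱ t] (M t) := by
    intro t ht1 ht2
    rw [hMdef]
    refine (measurable_const.mul (hLmeas t ht1 ht2).measurable).mul ?_
    refine Finset.measurable_prod _ (fun k hk => ?_)
    simp only [Finset.mem_Icc] at hk
    exact ((hLmeas k hk.1 (by omega)).measurable.mono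
      (hℱmono (by omega : k ≤ t)) le_rfl).pow measurable_const
  have hMbd : ∀ t, 1 ≤ t → t ≤ T → ∀ᵐ ω ∂μ,
      |M t ω| ≤ Real.exp (α t * ((1 / α t) * KA t)) := by
    intro t ht1 ht2
    filter_upwards [hMexp t ht1 ht2, hXst_bd] with ω h3 h4
    rw [h3, abs_of_pos (Real.exp_pos _)]
    apply Real.exp_le_exp.mpr
    have h5 := abs_le.mp (h4 t ht1 ht2)
    have hat := hα t (by simp only [Finset.mem_Icc]; omega)
    nlinarith [h5.1, h5.2]
  have hMint : ∀ t, 1 ≤ t → t ≤ T → Integrable (M t) μ := fun t a b =>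
    bdd_meas_integrable' (((hMmeas t a b).mono (hℱle t) le_rfl).aestronglyMeasurable)
      (hMbd t a b)
  have hMstep : ∀ s (f : Ω → ℝ) (Cf : ℝ), 1 ≤ s → s + 1 ≤ T → Measurable[ℱ s] f →
      (∀ᵐ ω ∂μ, |f ω| ≤ Cf) →
      ∫ ω, M (s+1) ω * f ω ∂μ = ∫ ω, M s ω * f ω ∂μ := by
    intro s f Cf hs1 hsT hfm hfb
    have hsmem : s ∈ Finset.Icc 1 T := by simp only [Finset.mem_Icc]; omega
    have hs1mem : s + 1 ∈ Finset.Icc 1 T := by simp only [Finset.mem_Icc]; omega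
    set G : Ω → ℝ := fun ω =>
      Real.exp (-(β 1 * x)) * (∏ k ∈ Finset.Icc 1 s, (L k ω) ^ (-(β (k+1) / α k))) * f ω
      with hGdef
    have hGmeas : Measurable[ℱ s] G := by
      refine (measurable_const.mul ?_).mul hfm
      refine Finset.measurable_prod _ (fun k hk => ?_)
      simp only [Finset.mem_Icc] at hk
      exact ((hLmeas k hk.1 (by omega)).measurable.mono
        (hℱmono hk.2) le_rfl).pow measurable_const
    set PB : ℝ := ∏ k ∈ Finset.Icc 1 s,
      max ((mm k) ^ (-(β (k+1) / α k))) ((MM k) ^ (-(β (k+1) / α k))) with hPBdef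
    have hprod_bd : ∀ᵐ ω ∂μ,
        |∏ k ∈ Finset.Icc 1 s, (L k ω) ^ (-(β (k+1) / α k))| ≤ PB := by
      filter_upwards [hLglob] with ω hω
      have hnn : ∀ k ∈ Finset.Icc 1 s, 0 ≤ (L k ω) ^ (-(β (k+1) / α k)) := by
        intro k hk; simp only [Finset.mem_Icc] at hk
        exact (Real.rpow_pos_of_pos
          (lt_of_lt_of_le (hmm k hk.1 (by omega)).1 (hω k hk.1 (by omega)).1) _).le
      rw [abs_of_nonneg (Finset.prod_nonneg hnn)]
      refine Finset.prod_le_prod hnn (fun k hk => ?_)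
      simp only [Finset.mem_Icc] at hk
      exact (rpow_mem_bounds (hmm k hk.1 (by omega)).1
        (hω k hk.1 (by omega)).1 (hω k hk.1 (by omega)).2).2
    have hCf0 : 0 ≤ Cf := by
      obtain ⟨ω, hω⟩ := hfb.exists
      exact (abs_nonneg _).trans hω
    have hGbd : ∀ᵐ ω ∂μ, |G ω| ≤ Real.exp (-(β 1 * x)) * PB * Cf := by
      filter_upwards [hprod_bd, hfb] with ω hp hf
      rw [hGdef]
      simp only
      rw [abs_mul, abs_mul, abs_of_pos (Real.exp_pos _)]
      have hPB0 : 0 ≤ PB := le_trans (abs_nonneg _) hp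
      exact mul_le_mul (mul_le_mul le_rfl hp (abs_nonneg _) (Real.exp_pos _).le) hf
        (abs_nonneg _) (mul_nonneg (Real.exp_pos _).le hPB0)
    have hGint : Integrable G μ :=
      bdd_meas_integrable' ((hGmeas.mono (hℱle s) le_rfl).aestronglyMeasurable) hGbd
    have hLi : Integrable (L (s+1)) μ := hLint (s+1) (by omega) hsT
    have hGLint : Integrable (G * L (s+1)) μ := by
      refine bdd_meas_integrable'
        (C := Real.exp (-(β 1 * x)) * PB * Cf * max |mm (s+1)| |MM (s+1)|)
        (((hGmeas.mono (hℱle s) le_rfl).mul ((hLmeas (s+1) (by omega) hsT).measurable.mono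
          (hℱle (s+1)) le_rfl)).aestronglyMeasurable) ?_
      filter_upwards [hGbd, (hmm (s+1) (by omega) hsT).2] with ω h1 h2
      rw [Pi.mul_apply, abs_mul]
      exact mul_le_mul h1 (abs_le_max_abs h2.1 h2.2) (abs_nonneg _)
        (le_trans (abs_nonneg _) h1)
    have hpull := condExp_stronglyMeasurable_mul_of_bound (hℱle s) hGmeas.stronglyMeasurable
      hLi (Real.exp (-(β 1 * x)) * PB * Cf)
      (by filter_upwards [hGbd] with ω h; rwa [Real.norm_eq_abs])
    have hcd : (μ[L (s+1) | ℱ s]) =ᵐ[μ] fun ω => (L s ω) ^ (β (s+1) / β s) := by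
      have h' := hcondL (s+1) (by omega) hsT
      simpa only [Nat.add_sub_cancel] using h'
    have hexp1 : -(β (s+1) / α s) + β (s+1) / β s = 1 := by
      have h := hβrec (s+1) (by omega) hsT
      simp only [Nat.add_sub_cancel] at h
      have hβs : β s ≠ 0 := (hβpos s hsmem).ne'
      have hβs1 : β (s+1) ≠ 0 := (hβpos (s+1) hs1mem).ne'
      have hαs : α s ≠ 0 := (hα s hsmem).ne'
      field_simp at h ⊢
      linarith [h]
    calc ∫ ω, M (s+1) ω * f ω ∂μ
        = ∫ ω, (G * L (s+1)) ω ∂μ := by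
          refine integral_congr_ae (Filter.Eventually.of_forall (fun ω => ?_))
          rw [Pi.mul_apply, hMdef, hGdef]
          simp only [Nat.add_sub_cancel]
          ring
      _ = ∫ ω, (μ[G * L (s+1) | ℱ s]) ω ∂μ := (integral_condExp (hℱle s)).symm
      _ = ∫ ω, (G * μ[L (s+1) | ℱ s]) ω ∂μ := integral_congr_ae hpull
      _ = ∫ ω, M s ω * f ω ∂μ := by
          refine integral_congr_ae ?_
          filter_upwards [hcd, hLglob] with ω hc hω
          rw [Pi.mul_apply, hc]
          rw [hGdef, hMdef]
          simp only
          have hLs_pos : 0 < L s ω :=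
            lt_of_lt_of_le (hmm s hs1 (by omega)).1 (hω s hs1 (by omega)).1
          rw [show Finset.Icc 1 s = insert s (Finset.Icc 1 (s-1)) from by
            ext k; simp only [Finset.mem_Icc, Finset.mem_insert]; omega]
          rw [Finset.prod_insert (by simp only [Finset.mem_Icc]; omega)]
          have hkey : (L s ω) ^ (-(β (s+1) / α s)) * (L s ω) ^ (β (s+1) / β s) = L s ω := by
            rw [← Real.rpow_add hLs_pos, hexp1, Real.rpow_one]
          set a1 := (L s ω) ^ (-(β (s+1) / α s)) with ha1
          set b1 := (L s ω) ^ (β (s+1) / β s) with hb1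
          rw [← hkey]
          ring
  have hMproj : ∀ t (f : Ω → ℝ) (Cf : ℝ), 1 ≤ t → t ≤ T → Measurable[ℱ t] f →
      (∀ᵐ ω ∂μ, |f ω| ≤ Cf) →
      ∫ ω, M t ω * f ω ∂μ = ∫ ω, M T ω * f ω ∂μ := by
    intro t f Cf h1 h2 hfm hfb
    have H : ∀ s, t ≤ s → s ≤ T → ∫ ω, M s ω * f ω ∂μ = ∫ ω, M t ω * f ω ∂μ := by
      intro s hts
      induction s, hts using Nat.le_induction with
      | base => intro _; rfl
      | succ s hts ih =>
        intro hsT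
        rw [hMstep s f Cf (by omega) hsT (hfm.mono (hℱmono hts) le_rfl) hfb]
        exact ih (by omega)
    exact (H T h2 le_rfl).symm
  obtain ⟨hXadapt, hXsum⟩ := hX
  have hXmeas : ∀ t, 1 ≤ t → t ≤ T → Measurable[ℱ t] (X t) := fun t a b =>
    (hXadapt t (by simp only [Finset.mem_Icc]; omega)).1
  have hXbd : ∀ t, 1 ≤ t → t ≤ T → ∃ C, 0 ≤ C ∧ ∀ᵐ ω ∂μ, |X t ω / B t ω| ≤ C := by
    intro t a b
    obtain ⟨C, hC⟩ := (hXadapt t (by simp only [Finset.mem_Icc]; omega)).2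
    refine ⟨max C 0, le_max_right _ _, ?_⟩
    filter_upwards [hC] with ω h
    have hB1 := hBge1 t b ω
    rw [abs_div, abs_of_nonneg (by linarith : (0:ℝ) ≤ B t ω)]
    calc |X t ω| / B t ω ≤ |X t ω| / 1 := by
          apply div_le_div_of_nonneg_left (abs_nonneg _) one_pos hB1
      _ = |X t ω| := div_one _
      _ ≤ max C 0 := le_trans h (le_max_left _ _)
  have hXstbd2 : ∀ t, 1 ≤ t → t ≤ T → ∀ᵐ ω ∂μ, |Xs t ω / B t ω| ≤ (1/α t) * KA t := by
    intro t a b; filter_upwards [hXst_bd] with ω h; exact h t a b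
  have hu_int : ∀ (W : Ω → ℝ) (t : ℕ) (CW : ℝ), t ∈ Finset.Icc 1 T → Measurable[ℱ t] W →
      (∀ᵐ ω ∂μ, |W ω| ≤ CW) → Integrable (fun ω => u t (W ω)) μ := by
    intro W t CW ht hWm hWb
    have hat := hα t ht
    have hfu : (fun ω => u t (W ω))
        = fun ω => (1 / α t) * (1 - Real.exp (-(α t) * W ω)) := funext fun ω => hu t _
    rw [hfu]
    refine bdd_meas_integrable' (C := (1/α t) * (1 + Real.exp (α t * CW))) ?_ ?_
    · exact (measurable_const.mul (measurable_const.sub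
        (((hWm.mono (hℱle t) le_rfl).const_mul _).exp))).aestronglyMeasurable
    · filter_upwards [hWb] with ω h
      have habs := abs_le.mp h
      have h1 : Real.exp (-(α t) * W ω) ≤ Real.exp (α t * CW) := by
        apply Real.exp_le_exp.mpr
        nlinarith [habs.1, habs.2]
      have h2 : 0 < Real.exp (-(α t) * W ω) := Real.exp_pos _
      rw [abs_mul, abs_of_pos (one_div_pos.mpr hat)]
      refine mul_le_mul_of_nonneg_left ?_ (one_div_pos.mpr hat).le
      rw [abs_le]
      constructor <;> nlinarith [Real.exp_pos (α t * CW)]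
  set D : ℕ → Ω → ℝ := fun t ω => X t ω / B t ω - Xs t ω / B t ω with hDdef
  have hDmeas : ∀ t, 1 ≤ t → t ≤ T → Measurable[ℱ t] (D t) := by
    intro t a b
    exact ((hXmeas t a b).div (hBmeas t b)).sub ((hXsmeas t a b).div (hBmeas t b))
  have hDbd : ∀ t, 1 ≤ t → t ≤ T → ∃ CD, ∀ᵐ ω ∂μ, |D t ω| ≤ CD := by
    intro t a b
    obtain ⟨C, hC0, hC⟩ := hXbd t a b
    refine ⟨C + (1/α t) * KA t, ?_⟩
    filter_upwards [hC, hXst_bd] with ω h1 h2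
    simp only [hDdef]
    calc |X t ω / B t ω - Xs t ω / B t ω| ≤ |X t ω / B t ω| + |Xs t ω / B t ω| := by
          rw [sub_eq_add_neg]; exact le_trans (abs_add_le _ _) (by rw [abs_neg])
      _ ≤ C + (1/α t) * KA t := add_le_add h1 (h2 t a b)
  have hMD_int : ∀ t, 1 ≤ t → t ≤ T → Integrable (fun ω => M t ω * D t ω) μ := by
    intro t a b
    obtain ⟨CD, hCD⟩ := hDbd t a b
    refine bdd_meas_integrable' (C := Real.exp (α t * ((1/α t) * KA t)) * max CD 0)
      ((((hMmeas t a b).mono (hℱle t) le_rfl).mul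
        ((hDmeas t a b).mono (hℱle t) le_rfl)).aestronglyMeasurable) ?_
    filter_upwards [hMbd t a b, hCD] with ω h1 h2
    rw [abs_mul]
    exact mul_le_mul h1 (le_trans h2 (le_max_left _ _)) (abs_nonneg _)
      ((abs_nonneg _).trans h1)
  have hIu_Xs : ∀ t, 1 ≤ t → t ≤ T → Integrable (fun ω => u t (Xs t ω / B t ω)) μ := by
    intro t a b
    exact hu_int (fun ω => Xs t ω / B t ω) t ((1/α t) * KA t)
      (by simp only [Finset.mem_Icc]; omega)
      ((hXsmeas t a b).div (hBmeas t b)) (hXstbd2 t a b)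
  have hIu_X : ∀ t, 1 ≤ t → t ≤ T → Integrable (fun ω => u t (X t ω / B t ω)) μ := by
    intro t a b
    obtain ⟨C, hC0, hC⟩ := hXbd t a b
    exact hu_int (fun ω => X t ω / B t ω) t C (by simp only [Finset.mem_Icc]; omega)
      ((hXmeas t a b).div (hBmeas t b)) hC
  set g : ℕ → Ω → ℝ := fun t ω =>
    u t (Xs t ω / B t ω) + M t ω * D t ω - u t (X t ω / B t ω) with hgdef
  have hg_nonneg : ∀ t, 1 ≤ t → t ≤ T → ∀ᵐ ω ∂μ, 0 ≤ g t ω := by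
    intro t a b
    filter_upwards [hMexp t a b] with ω hM
    simp only [hgdef, hDdef]
    rw [hM, hu t, hu t]
    have := tangent_ineq (a := α t) (y := X t ω / B t ω) (z := Xs t ω / B t ω)
      (hα t (by simp only [Finset.mem_Icc]; omega))
    linarith
  have hg_int : ∀ t, 1 ≤ t → t ≤ T → Integrable (g t) μ := by
    intro t a b
    exact ((hIu_Xs t a b).add (hMD_int t a b)).sub (hIu_X t a b)
  have hIMD : ∑ t ∈ Finset.Icc 1 T, ∫ ω, M t ω * D t ω ∂μ = 0 := by
    have hproj : ∀ t ∈ Finset.Icc 1 T,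
        ∫ ω, M t ω * D t ω ∂μ = ∫ ω, M T ω * D t ω ∂μ := by
      intro t ht
      simp only [Finset.mem_Icc] at ht
      obtain ⟨CD, hCD⟩ := hDbd t ht.1 ht.2
      exact hMproj t (D t) CD ht.1 ht.2 (hDmeas t ht.1 ht.2) hCD
    rw [Finset.sum_congr rfl hproj]
    have hint : ∀ t ∈ Finset.Icc 1 T, Integrable (fun ω => M T ω * D t ω) μ := by
      intro t ht
      simp only [Finset.mem_Icc] at ht
      obtain ⟨CD, hCD⟩ := hDbd t ht.1 ht.2
      refine bdd_meas_integrable' (C := Real.exp (α T * ((1/α T) * KA T)) * max CD 0)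
        ((((hMmeas T hT le_rfl).mono (hℱle T) le_rfl).mul
          ((hDmeas t ht.1 ht.2).mono (hℱle t) le_rfl)).aestronglyMeasurable) ?_
      filter_upwards [hMbd T hT le_rfl, hCD] with ω h1 h2
      rw [abs_mul]
      exact mul_le_mul h1 (le_trans h2 (le_max_left _ _)) (abs_nonneg _)
        ((abs_nonneg _).trans h1)
    rw [← integral_finset_sum _ hint]
    have hz : ∀ᵐ ω ∂μ, ∑ t ∈ Finset.Icc 1 T, M T ω * D t ω = 0 := by
      filter_upwards [hXsum] with ω h
      rw [← Finset.mul_sum]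
      have hD0 : ∑ t ∈ Finset.Icc 1 T, D t ω = 0 := by
        simp only [hDdef]
        rw [Finset.sum_sub_distrib, h, hXssum ω]
        ring
      rw [hD0, mul_zero]
    rw [integral_congr_ae hz, integral_zero]
  have hsplit : ∀ t ∈ Finset.Icc 1 T, ∫ ω, g t ω ∂μ
      = (∫ ω, u t (Xs t ω / B t ω) ∂μ) + (∫ ω, M t ω * D t ω ∂μ)
        - ∫ ω, u t (X t ω / B t ω) ∂μ := by
    intro t ht
    simp only [Finset.mem_Icc] at ht
    simp only [hgdef]
    have hfg : Integrable (fun ω => u t (Xs t ω / B t ω) + M t ω * D t ω) μ :=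
      (hIu_Xs t ht.1 ht.2).add (hMD_int t ht.1 ht.2)
    rw [integral_sub hfg (hIu_X t ht.1 ht.2),
      integral_add (hIu_Xs t ht.1 ht.2) (hMD_int t ht.1 ht.2)]
  have hintg_nonneg : ∀ t ∈ Finset.Icc 1 T, 0 ≤ ∫ ω, g t ω ∂μ := by
    intro t ht
    simp only [Finset.mem_Icc] at ht
    exact integral_nonneg_of_ae (hg_nonneg t ht.1 ht.2)
  have hsum_g : ∑ t ∈ Finset.Icc 1 T, ∫ ω, g t ω ∂μ
      = allocVal μ T u B Xs - allocVal μ T u B X := by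
    rw [Finset.sum_congr rfl hsplit, Finset.sum_sub_distrib, Finset.sum_add_distrib, hIMD,
      add_zero]
    rfl
  have heq0 : ∑ t ∈ Finset.Icc 1 T, ∫ ω, g t ω ∂μ = 0 := by
    have h1 := hXopt Xs hXsAlloc
    have h2 : 0 ≤ ∑ t ∈ Finset.Icc 1 T, ∫ ω, g t ω ∂μ := Finset.sum_nonneg hintg_nonneg
    linarith [hsum_g]
  have hgzero : ∀ t, 1 ≤ t → t ≤ T → g t =ᵐ[μ] 0 := by
    intro t a b
    have hall := (Finset.sum_eq_zero_iff_of_nonneg hintg_nonneg).mp heq0 t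
      (by simp only [Finset.mem_Icc]; omega)
    exact (integral_eq_zero_iff_of_nonneg_ae (hg_nonneg t a b) (hg_int t a b)).mp hall
  have hXeqXs : ∀ t, 1 ≤ t → t ≤ T → X t =ᵐ[μ] Xs t := by
    intro t a b
    filter_upwards [hgzero t a b, hMexp t a b] with ω h0 hM
    simp only [Pi.zero_apply, hgdef, hDdef] at h0
    rw [hM, hu t, hu t] at h0
    have h1 : (1/α t) * (1 - Real.exp (-(α t) * (X t ω / B t ω)))
        = (1/α t) * (1 - Real.exp (-(α t) * (Xs t ω / B t ω)))
          + Real.exp (-(α t) * (Xs t ω / B t ω)) * (X t ω / B t ω - Xs t ω / B t ω) := by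
      linarith
    have hdiv := tangent_eq (hα t (by simp only [Finset.mem_Icc]; omega)) h1
    have hBt := hBne t b ω
    have h2 := congrArg (fun q => q * B t ω) hdiv
    simp only [div_mul_cancel₀ _ hBt] at h2
    exact h2
  have hLnglob : ∀ᵐ ω ∂μ, ∀ k, 1 ≤ k → k ≤ T → LnZ k ω = L k ω := by
    rw [MeasureTheory.ae_all_iff]
    intro k
    by_cases h : 1 ≤ k ∧ k ≤ T
    · filter_upwards [hLnZae k h.1 h.2] with ω h' _ _; exact h'
    · filter_upwards with ω h1 h2; exact absurd ⟨h1, h2⟩ h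
  have hfinal : ∀ t, 1 ≤ t → t ≤ T → ∀ᵐ ω ∂μ,
      X t ω = (B t ω / α t) * (β 1 * x - Real.log (LnZ t ω)
        + ∑ k ∈ Finset.Icc 1 (t-1), (β (k+1) / α k) * Real.log (LnZ k ω)) := by
    intro t a b
    filter_upwards [hXeqXs t a b, hLnglob] with ω h1 h2
    rw [h1]
    simp only [hXsdef]
    have hs : ∑ k ∈ Finset.Icc 1 (t-1), (β (k+1) / α k) * Real.log (LnZ k ω)
        = ∑ k ∈ Finset.Icc 1 (t-1), (β (k+1) / α k) * Real.log (L k ω) :=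
      Finset.sum_congr rfl (fun k hk => by
        simp only [Finset.mem_Icc] at hk
        rw [h2 k hk.1 (by omega)])
    rw [hs, h2 t a b]
  refine ⟨?_, ?_⟩
  · filter_upwards [hfinal 1 le_rfl hT] with ω h
    rw [h, show Finset.Icc 1 (1-1) = (∅ : Finset ℕ) from Finset.Icc_eq_empty (by omega),
      Finset.sum_empty, add_zero]
  · intro t ht
    simp only [Finset.mem_Icc] at ht
    exact hfinal t (by omega) ht.2
end
end

section
/- Explicit form of the L-process in the insurance setting: for Z ∈ L^∞ with representation Z = ∑_{t=1}^T z_t 1_{(t−1 < τ ≤ t)} + z_{T+1} 1_{(T < τ)}, the process (L_t(α, −Z))_{t∈𝕋} satisfies L_1(α, −Z) = e^{β_1 z_1} D_1 + h_1^{β_1} (1 − D_1), and for t = 2,...,T, L_t(α, −Z) = exp[β_t ∑_{s=1}^{t−1} (z_s − z_{s+1}) D_s] · [e^{β_t z_t} D_t + h_t^{β_t} (1 − D_t)]. -/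
open MeasureTheory Finset Real

noncomputable section

private lemma tele_sum (z : ℕ → ℝ) (k : ℕ) :
    ∀ n, k ≤ n → ∑ s ∈ Finset.Icc k n, (z s - z (s + 1)) = z k - z (n + 1) := by
  intro n
  induction n with
  | zero => intro hk; interval_cases k; simp
  | succ n ih =>
    intro hk
    rcases Nat.lt_or_ge k (n + 1) with h' | h'
    · rw [Finset.sum_Icc_succ_top (by omega), ih (by omega)]; ring
    · have hkn : k = n + 1 := by omega
      subst hkn; simp

private lemma convex_pos {a b q p : ℝ} (ha : 0 < a) (hb : 0 < b) (hq : 0 ≤ q) (hp : 0 ≤ p)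
    (hqp : q + p = 1) : 0 < a * q + b * p := by
  have h1 : min a b * q + min a b * p = min a b := by rw [← mul_add, hqp, mul_one]
  have h2 : min a b * q ≤ a * q := mul_le_mul_of_nonneg_right (min_le_left a b) hq
  have h3 : min a b * p ≤ b * p := mul_le_mul_of_nonneg_right (min_le_right a b) hp
  have h4 : 0 < min a b := lt_min ha hb
  linarith

/-- The explicit formula for the `L`-process. -/
private def Fdef {Ω : Type*} (β z h : ℕ → ℝ) (D : ℕ → Ω → ℝ) (t : ℕ) (ω : Ω) : ℝ :=
  Real.exp (β t * ∑ s ∈ Finset.Icc 1 (t - 1), (z s - z (s + 1)) * D s ω) *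
    (Real.exp (β t * z t) * D t ω + (h t) ^ (β t) * (1 - D t ω))

/-- Explicit form of the L-process in the insurance setting (Proposition 4.2):
for `Z = ∑_{t=1}^T z_t 1_{(t-1 < τ ≤ t)} + z_{T+1} 1_{(T < τ)}`, the process
`(L_t(α, -Z))` is given by the formula `(L2)` in terms of the sequence `(h_t)`. -/
theorem L_process_insurance_formula
    {Ω : Type*} [mΩ : MeasurableSpace Ω] (μ : Measure Ω) [IsProbabilityMeasure μ]
    (T : ℕ) (hT : 1 ≤ T)
    (τ : Ω → ℝ) (hτmeas : Measurable τ) (hτpos : ∀ ω, 0 < τ ω)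
    (hτcont : ∀ s : ℝ, 0 ≤ s → μ {ω | τ ω = s} = 0)
    (D : ℕ → Ω → ℝ) (hD : ∀ t ω, D t ω = if τ ω ≤ (t : ℝ) then 1 else 0)
    (ℋ : ℕ → MeasurableSpace Ω)
    (hℋ : ∀ t, ℋ t =
      ⨆ s ∈ Finset.range (t + 1), MeasurableSpace.comap (D s) (inferInstance : MeasurableSpace ℝ))
    (q p : ℕ → ℝ)
    (hsurv : ∀ t, t < T → 0 < μ {ω | (t : ℝ) < τ ω})
    (hq : ∀ t, t < T → q t =
      (μ {ω | (t : ℝ) < τ ω ∧ τ ω ≤ (t : ℝ) + 1}).toReal / (μ {ω | (t : ℝ) < τ ω}).toReal)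
    (hp : ∀ t, t < T → p t = 1 - q t)
    (α β : ℕ → ℝ) (hα : ∀ t ∈ Finset.Icc 1 T, 0 < α t)
    (hβ : ∀ t ∈ Finset.Icc 1 T, 1 / β t = ∑ k ∈ Finset.Icc t T, 1 / α k)
    (z : ℕ → ℝ) (Z : Ω → ℝ)
    (hZ : ∀ ω, Z ω =
      (∑ t ∈ Finset.Icc 1 T, if (t : ℝ) - 1 < τ ω ∧ τ ω ≤ (t : ℝ) then z t else 0) +
      (if (T : ℝ) < τ ω then z (T + 1) else 0))
    (L : ℕ → Ω → ℝ)
    -- `L` is the process `(L_t(α, -Z))`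
    (hLT : L T =ᵐ[μ] fun ω => Real.exp (-(α T) * (-Z ω)))
    (hLstep : ∀ t ∈ Finset.Icc 2 T,
      L (t - 1) =ᵐ[μ] fun ω => ((μ[L t | ℋ (t - 1)]) ω) ^ (β (t - 1) / β t))
    (h : ℕ → ℝ)
    (hhT : h T = Real.exp (z (T + 1)))
    (hhstep : ∀ t ∈ Finset.Icc 1 T,
      h (t - 1) = (Real.exp (β t * z t) * q (t - 1) + (h t) ^ (β t) * p (t - 1)) ^ (1 / β t)) :
    (L 1 =ᵐ[μ] fun ω =>
      Real.exp (β 1 * z 1) * D 1 ω + (h 1) ^ (β 1) * (1 - D 1 ω)) ∧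
    (∀ t ∈ Finset.Icc 2 T, L t =ᵐ[μ] fun ω =>
      Real.exp (β t * ∑ s ∈ Finset.Icc 1 (t - 1), (z s - z (s + 1)) * D s ω) *
        (Real.exp (β t * z t) * D t ω + (h t) ^ (β t) * (1 - D t ω))) := by
  -- basic facts about D
  have hDmeas : ∀ s, Measurable (D s) := by
    intro s
    have hfe : D s = fun ω => if τ ω ≤ (s : ℝ) then (1 : ℝ) else 0 := funext fun ω => hD s ω
    rw [hfe]
    exact Measurable.ite (measurableSet_le hτmeas measurable_const) measurable_const
      measurable_const
  have hm : ∀ t, ℋ t ≤ mΩ := by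
    intro t; rw [hℋ]
    exact iSup₂_le fun s _ => (hDmeas s).comap_le
  have hDH : ∀ s t, s ≤ t → Measurable[ℋ t] (D s) := by
    intro s t hst
    refine Measurable.of_comap_le ?_
    rw [hℋ]
    exact le_iSup₂ (f := fun s (_ : s ∈ Finset.range (t + 1)) =>
      MeasurableSpace.comap (D s) inferInstance) s (Finset.mem_range.mpr (by omega))
  have hD01 : ∀ s ω, D s ω = 0 ∨ D s ω = 1 := by
    intro s ω; rw [hD]; split
    · right; rfl
    · left; rfl
  have hDval : ∀ (k : ℕ) ω, (k : ℝ) - 1 < τ ω → τ ω ≤ (k : ℝ) → ∀ s,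
      D s ω = if k ≤ s then 1 else 0 := by
    intro k ω h1 h2 s
    rw [hD]
    by_cases hks : k ≤ s
    · rw [if_pos (le_trans h2 (by exact_mod_cast hks)), if_pos hks]
    · have hs : s + 1 ≤ k := by omega
      have hcast : ((s : ℝ) + 1) ≤ (k : ℝ) := by exact_mod_cast hs
      rw [if_neg (by linarith), if_neg hks]
  -- sum formula
  have hSum : ∀ (k : ℕ) ω, 1 ≤ k → (k : ℝ) - 1 < τ ω → τ ω ≤ (k : ℝ) → ∀ n,
      ∑ s ∈ Finset.Icc 1 n, (z s - z (s + 1)) * D s ω =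
        if k ≤ n then z k - z (n + 1) else 0 := by
    intro k ω hk h1 h2 n
    have hrw : ∀ s, (z s - z (s + 1)) * D s ω = if k ≤ s then z s - z (s + 1) else 0 := by
      intro s; rw [hDval k ω h1 h2 s]
      split <;> simp
    simp_rw [hrw]
    rw [← Finset.sum_filter]
    have hfil : Finset.filter (fun s => k ≤ s) (Finset.Icc 1 n) = Finset.Icc k n := by
      ext s; simp only [Finset.mem_filter, Finset.mem_Icc]; omega
    rw [hfil]
    by_cases hkn : k ≤ n
    · rw [if_pos hkn, tele_sum z k n hkn]
    · rw [if_neg hkn, Finset.Icc_eq_empty (by omega), Finset.sum_empty]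
  -- Z values
  have hZval : ∀ ω (k : ℕ), 1 ≤ k → k ≤ T → (k : ℝ) - 1 < τ ω → τ ω ≤ (k : ℝ) → Z ω = z k := by
    intro ω k hk1 hkT h1 h2
    rw [hZ]
    have hTlt : ¬ ((T : ℝ) < τ ω) := by
      have hc : (k : ℝ) ≤ (T : ℝ) := by exact_mod_cast hkT
      push_neg; linarith
    rw [if_neg hTlt, add_zero]
    have hcong : ∀ t' ∈ Finset.Icc 1 T,
        (if (t' : ℝ) - 1 < τ ω ∧ τ ω ≤ (t' : ℝ) then z t' else 0) =
          if t' = k then z t' else 0 := by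
      intro t' _
      rcases lt_trichotomy t' k with hlt | heq | hgt
      · have hcast : ((t' : ℝ) + 1) ≤ (k : ℝ) := by exact_mod_cast hlt
        rw [if_neg (fun hc => by have := hc.2; linarith), if_neg (by omega)]
      · subst heq; rw [if_pos ⟨h1, h2⟩, if_pos rfl]
      · have hcast : ((k : ℝ) + 1) ≤ (t' : ℝ) := by exact_mod_cast hgt
        rw [if_neg (fun hc => by have := hc.1; linarith), if_neg (by omega)]
    rw [Finset.sum_congr rfl hcong, Finset.sum_ite_eq' (Finset.Icc 1 T) k z,
      if_pos (Finset.mem_Icc.mpr ⟨hk1, hkT⟩)]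
  have hZT : ∀ ω, (T : ℝ) < τ ω → Z ω = z (T + 1) := by
    intro ω hgt
    rw [hZ, if_pos hgt]
    have hcong : ∀ t' ∈ Finset.Icc 1 T,
        (if (t' : ℝ) - 1 < τ ω ∧ τ ω ≤ (t' : ℝ) then z t' else 0) = 0 := by
      intro t' ht'
      rw [if_neg]
      rintro ⟨-, hc⟩
      have hcast : (t' : ℝ) ≤ (T : ℝ) := by exact_mod_cast (Finset.mem_Icc.mp ht').2
      linarith
    rw [Finset.sum_congr rfl hcong, Finset.sum_const_zero, zero_add]
  -- β facts
  have hβpos : ∀ t ∈ Finset.Icc 1 T, 0 < β t := by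
    intro t ht
    obtain ⟨h1, h2⟩ := Finset.mem_Icc.mp ht
    have hpos : 0 < 1 / β t := by
      rw [hβ t ht]
      apply Finset.sum_pos
      · intro k hk
        obtain ⟨hk1, hk2⟩ := Finset.mem_Icc.mp hk
        exact one_div_pos.mpr (hα k (Finset.mem_Icc.mpr ⟨le_trans h1 hk1, hk2⟩))
      · exact ⟨t, Finset.mem_Icc.mpr ⟨le_refl t, h2⟩⟩
    exact one_div_pos.mp hpos
  have hβT : β T = α T := by
    have h1 : 1 / β T = 1 / α T := by
      rw [hβ T (Finset.mem_Icc.mpr ⟨hT, le_refl T⟩), Finset.Icc_self, Finset.sum_singleton]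
    have h2 := hβpos T (Finset.mem_Icc.mpr ⟨hT, le_refl T⟩)
    have h3 := hα T (Finset.mem_Icc.mpr ⟨hT, le_refl T⟩)
    field_simp at h1
    linarith
  -- q facts
  have hqval : ∀ t', t' < T → 0 ≤ q t' ∧ q t' ≤ 1 := by
    intro t' ht'
    rw [hq t' ht']
    constructor
    · positivity
    · exact div_le_one_of_le₀
        (ENNReal.toReal_mono (measure_ne_top μ _) (measure_mono (fun ω hω => hω.1)))
        ENNReal.toReal_nonneg
  -- positivity of h
  have hhpos : ∀ d t, t + d = T → 0 < h t := by
    intro d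
    induction d with
    | zero =>
      intro t htT
      have : t = T := by omega
      subst this; rw [hhT]; exact Real.exp_pos _
    | succ d ih =>
      intro t htT
      have hstep := hhstep (t + 1) (Finset.mem_Icc.mpr ⟨by omega, by omega⟩)
      simp only [Nat.add_sub_cancel] at hstep
      have htT' : t < T := by omega
      obtain ⟨hq0, hq1⟩ := hqval t htT'
      have hp0 : 0 ≤ p t := by rw [hp t htT']; linarith
      have hqp : q t + p t = 1 := by rw [hp t htT']; ring
      have hh1 : 0 < h (t + 1) := ih (t + 1) (by omega)
      have hin : 0 < Real.exp (β (t + 1) * z (t + 1)) * q t + h (t + 1) ^ (β (t + 1)) * p t :=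
        convex_pos (Real.exp_pos _) (Real.rpow_pos_of_pos hh1 _) hq0 hp0 hqp
      rw [hstep]
      exact Real.rpow_pos_of_pos hin _
  -- generic bound for the shape of F and G
  have hshape : ∀ (βc : ℝ) (n r : ℕ) (a b : ℝ), 0 < a → 0 < b → ∀ ω,
      |Real.exp (βc * ∑ s ∈ Finset.Icc 1 n, (z s - z (s + 1)) * D s ω) *
        (a * D r ω + b * (1 - D r ω))|
        ≤ Real.exp (|βc| * ∑ s ∈ Finset.Icc 1 n, |z s - z (s + 1)|) * (a + b) := by
    intro βc n r a b ha hb ω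
    have hS : |βc * ∑ s ∈ Finset.Icc 1 n, (z s - z (s + 1)) * D s ω| ≤
        |βc| * ∑ s ∈ Finset.Icc 1 n, |z s - z (s + 1)| := by
      rw [abs_mul]
      refine mul_le_mul_of_nonneg_left ?_ (abs_nonneg βc)
      calc |∑ s ∈ Finset.Icc 1 n, (z s - z (s + 1)) * D s ω|
          ≤ ∑ s ∈ Finset.Icc 1 n, |(z s - z (s + 1)) * D s ω| :=
            Finset.abs_sum_le_sum_abs _ _
        _ ≤ ∑ s ∈ Finset.Icc 1 n, |z s - z (s + 1)| := by
            refine Finset.sum_le_sum fun s _ => ?_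
            rw [abs_mul]
            refine mul_le_of_le_one_right (abs_nonneg _) ?_
            rcases hD01 s ω with h0 | h1
            · rw [h0]; simp
            · rw [h1]; simp
    rw [abs_mul]
    refine mul_le_mul ?_ ?_ (abs_nonneg _) (le_of_lt (Real.exp_pos _))
    · rw [abs_of_pos (Real.exp_pos _)]
      exact Real.exp_le_exp.mpr (le_trans (le_abs_self _) hS)
    · rcases hD01 r ω with h0 | h1
      · rw [h0, show a * 0 + b * (1 - 0) = b by ring, abs_of_pos hb]; linarith
      · rw [h1, show a * 1 + b * (1 - 1) = a by ring, abs_of_pos ha]; linarith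
  -- integrability of shape
  have hFmeas : ∀ t, Measurable (Fdef β z h D t) := by
    intro t
    apply Measurable.mul
    · exact Real.measurable_exp.comp (measurable_const.mul
        (Finset.measurable_sum _ fun s _ => measurable_const.mul (hDmeas s)))
    · exact (measurable_const.mul (hDmeas t)).add
        (measurable_const.mul (measurable_const.sub (hDmeas t)))
  have hFint : ∀ t, 0 < h t → Integrable (Fdef β z h D t) μ := by
    intro t hht
    refine (integrable_const (Real.exp (|β t| * ∑ s ∈ Finset.Icc 1 (t - 1), |z s - z (s + 1)|) *
      (Real.exp (β t * z t) + h t ^ (β t)))).mono' (hFmeas t).stronglyMeasurable.aestronglyMeasurable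
      (Filter.Eventually.of_forall fun ω => ?_)
    rw [Real.norm_eq_abs]
    exact hshape (β t) (t - 1) t _ _ (Real.exp_pos _) (Real.rpow_pos_of_pos hht _) ω
  -- base case : L T =ᵐ F T
  have hbase : L T =ᵐ[μ] Fdef β z h D T := by
    refine hLT.trans (Filter.Eventually.of_forall ?_)
    intro ω
    have hrw : -(α T) * (-Z ω) = α T * Z ω := by ring
    show Real.exp (-(α T) * (-Z ω)) = _
    rw [hrw]
    rcases le_or_gt (τ ω) (T : ℝ) with hle | hgt
    · have hk1 : 1 ≤ ⌈τ ω⌉₊ := Nat.one_le_ceil_iff.mpr (hτpos ω)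
      set k := ⌈τ ω⌉₊ with hkdef
      have hkT : k ≤ T := Nat.ceil_le.mpr hle
      have hτk : τ ω ≤ (k : ℝ) := Nat.le_ceil _
      have hτk1 : (k : ℝ) - 1 < τ ω := by
        have := Nat.ceil_lt_add_one (le_of_lt (hτpos ω))
        simp only [hkdef]; linarith
      rw [hZval ω k hk1 hkT hτk1 hτk]
      simp only [Fdef]
      rw [hSum k ω hk1 hτk1 hτk (T - 1), hDval k ω hτk1 hτk T, if_pos hkT]
      have hT1 : T - 1 + 1 = T := by omega
      by_cases hkT1 : k ≤ T - 1
      · rw [if_pos hkT1, hT1, hβT]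
        simp only [mul_one, sub_self, mul_zero, add_zero, ← Real.exp_add]
        congr 1; ring
      · have hkeq : k = T := by omega
        rw [if_neg hkT1, hkeq, hβT]
        simp only [mul_zero, Real.exp_zero, one_mul, mul_one, sub_self, add_zero]
    · rw [hZT ω hgt]
      have hDz : ∀ s, s ≤ T → D s ω = 0 := by
        intro s hs
        rw [hD, if_neg]
        have hcast : (s : ℝ) ≤ (T : ℝ) := by exact_mod_cast hs
        push_neg; linarith
      simp only [Fdef]
      rw [Finset.sum_eq_zero fun s hs => by
          rw [hDz s (by have := (Finset.mem_Icc.mp hs).2; omega)]; ring,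
        hDz T le_rfl, hhT, hβT, ← Real.exp_mul]
      simp only [mul_zero, Real.exp_zero, one_mul, sub_zero, mul_one, zero_add]
      congr 1; ring
  -- main downward induction
  have main : ∀ d t, 1 ≤ t → t + d = T → L t =ᵐ[μ] Fdef β z h D t := by
    intro d
    induction d with
    | zero =>
      intro t ht1 htT
      have : t = T := by omega
      subst this; exact hbase
    | succ d ih =>
      intro t ht1 htT
      obtain ⟨m, rfl⟩ : ∃ m, t = m + 1 := ⟨t - 1, by omega⟩
      have hIH : L (m + 2) =ᵐ[μ] Fdef β z h D (m + 2) := ih (m + 2) (by omega) (by omega)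
      have hm2T : m + 2 ≤ T := by omega
      have hmlt : m + 1 < T := by omega
      have hβ₂ : 0 < β (m + 2) := hβpos _ (Finset.mem_Icc.mpr ⟨by omega, hm2T⟩)
      have hβ₁ : 0 < β (m + 1) := hβpos _ (Finset.mem_Icc.mpr ⟨by omega, by omega⟩)
      obtain ⟨hq0, hq1⟩ := hqval (m + 1) hmlt
      have hp0 : 0 ≤ p (m + 1) := by rw [hp _ hmlt]; linarith
      have hqp : q (m + 1) + p (m + 1) = 1 := by rw [hp _ hmlt]; ring
      have hh2 : 0 < h (m + 2) := hhpos d (m + 2) (by omega)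
      set c := Real.exp (β (m + 2) * z (m + 2)) * q (m + 1) +
        h (m + 2) ^ (β (m + 2)) * p (m + 1) with hc
      have hcpos : 0 < c :=
        convex_pos (Real.exp_pos _) (Real.rpow_pos_of_pos hh2 _) hq0 hp0 hqp
      have hh1 : h (m + 1) = c ^ (1 / β (m + 2)) := by
        have hs := hhstep (m + 2) (Finset.mem_Icc.mpr ⟨by omega, hm2T⟩)
        simpa using hs
      set G : Ω → ℝ := fun ω =>
        Real.exp (β (m + 2) * ∑ s ∈ Finset.Icc 1 m, (z s - z (s + 1)) * D s ω) *
          (Real.exp (β (m + 2) * z (m + 1)) * D (m + 1) ω + c * (1 - D (m + 1) ω)) with hG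
      set B : Set Ω := {ω | ((m + 1 : ℕ) : ℝ) < τ ω} with hBdef
      have hBmeas : MeasurableSet B := measurableSet_lt measurable_const hτmeas
      have hDzB : ∀ ω, ((m + 1 : ℕ) : ℝ) < τ ω → ∀ s, s ≤ m + 1 → D s ω = 0 := by
        intro ω hω s hs
        rw [hD, if_neg]
        have hcast : ((s : ℕ) : ℝ) ≤ ((m + 1 : ℕ) : ℝ) := by exact_mod_cast hs
        push_neg; linarith
      have hBH : MeasurableSet[ℋ (m + 1)] B := by
        have hBeq : B = D (m + 1) ⁻¹' {0} := by
          ext ω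
          simp only [hBdef, Set.mem_setOf_eq, Set.mem_preimage, Set.mem_singleton_iff, hD]
          by_cases h' : τ ω ≤ ((m + 1 : ℕ) : ℝ)
          · simp [h', not_lt.mpr h']
          · simp [h', lt_of_not_ge h']
        rw [hBeq]
        exact hDH (m + 1) (m + 1) le_rfl (measurableSet_singleton 0)
      -- atom property of B in ℋ (m+1)
      have hatom : ∀ A : Set Ω, MeasurableSet[ℋ (m + 1)] A → A ∩ B = ∅ ∨ B ⊆ A := by
        intro A hA
        let 𝒞 : MeasurableSpace Ω :=
          { MeasurableSet' := fun A => A ∩ B = ∅ ∨ B ⊆ A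
            measurableSet_empty := Or.inl (by simp)
            measurableSet_compl := by
              rintro A (hA' | hA')
              · right
                intro ω hω hωA
                exact Set.eq_empty_iff_forall_notMem.mp hA' ω ⟨hωA, hω⟩
              · left
                apply Set.eq_empty_iff_forall_notMem.mpr
                rintro ω ⟨hωA, hωB⟩
                exact hωA (hA' hωB)
            measurableSet_iUnion := by
              intro f hf
              by_cases hex : ∃ n, B ⊆ f n
              · obtain ⟨n, hn⟩ := hex
                exact Or.inr (hn.trans (Set.subset_iUnion f n))
              · push_neg at hex
                left
                apply Set.eq_empty_iff_forall_notMem.mpr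
                rintro ω ⟨hωU, hωB⟩
                obtain ⟨n, hn⟩ := Set.mem_iUnion.mp hωU
                rcases hf n with hfn | hfn
                · exact Set.eq_empty_iff_forall_notMem.mp hfn ω ⟨hn, hωB⟩
                · exact hex n hfn }
        have hle : ℋ (m + 1) ≤ 𝒞 := by
          rw [hℋ]
          refine iSup₂_le fun s hs => ?_
          intro A' hA'
          obtain ⟨E, -, rfl⟩ := hA'
          have hsm : s ≤ m + 1 := by
            have := Finset.mem_range.mp hs; omega
          by_cases h0 : (0 : ℝ) ∈ E
          · right
            intro ω hω
            simp only [Set.mem_preimage]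
            rw [hDzB ω hω s hsm]
            exact h0
          · left
            apply Set.eq_empty_iff_forall_notMem.mpr
            rintro ω ⟨hωA, hωB⟩
            rw [Set.mem_preimage, hDzB ω hωB s hsm] at hωA
            exact h0 hωA
        exact hle A hA
      -- F (m+2) = G off B
      have hFG : ∀ ω, τ ω ≤ ((m + 1 : ℕ) : ℝ) → Fdef β z h D (m + 2) ω = G ω := by
        intro ω hω
        have hd1 : D (m + 1) ω = 1 := by rw [hD, if_pos hω]
        have hd2 : D (m + 2) ω = 1 := by
          rw [hD, if_pos]
          refine le_trans hω ?_
          push_cast; linarith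
        simp only [Fdef, hG]
        have hsplit : ∑ s ∈ Finset.Icc 1 (m + 2 - 1), (z s - z (s + 1)) * D s ω
            = (∑ s ∈ Finset.Icc 1 m, (z s - z (s + 1)) * D s ω) +
              (z (m + 1) - z (m + 2)) * D (m + 1) ω := by
          rw [show m + 2 - 1 = m + 1 from rfl, Finset.sum_Icc_succ_top (by omega)]
        rw [hsplit, hd1, hd2]
        simp only [mul_one, sub_self, mul_zero, add_zero, ← Real.exp_add]
        congr 1; ring
      -- values of F on B
      have hFB1 : ∀ ω, ((m + 1 : ℕ) : ℝ) < τ ω → τ ω ≤ ((m + 1 : ℕ) : ℝ) + 1 →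
          Fdef β z h D (m + 2) ω = Real.exp (β (m + 2) * z (m + 2)) := by
        intro ω h1 h2
        have hd2 : D (m + 2) ω = 1 := by
          rw [hD, if_pos]; push_cast at h2 ⊢; linarith
        simp only [Fdef]
        rw [show m + 2 - 1 = m + 1 from rfl,
          Finset.sum_eq_zero fun s hs => by
            rw [hDzB ω h1 s (Finset.mem_Icc.mp hs).2]; ring, hd2]
        simp only [mul_zero, Real.exp_zero, one_mul, mul_one, sub_self, add_zero]
      have hFB2 : ∀ ω, ((m + 1 : ℕ) : ℝ) + 1 < τ ω →
          Fdef β z h D (m + 2) ω = h (m + 2) ^ (β (m + 2)) := by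
        intro ω h1
        have h1' : ((m + 1 : ℕ) : ℝ) < τ ω := by linarith
        have hd2 : D (m + 2) ω = 0 := by
          rw [hD, if_neg]; push_cast at h1 ⊢; linarith
        simp only [Fdef]
        rw [show m + 2 - 1 = m + 1 from rfl,
          Finset.sum_eq_zero fun s hs => by
            rw [hDzB ω h1' s (Finset.mem_Icc.mp hs).2]; ring, hd2]
        simp only [mul_zero, Real.exp_zero, one_mul, zero_add, sub_zero, mul_one]
      have hGB : ∀ ω, ω ∈ B → G ω = c := by
        intro ω hω
        simp only [hG]
        rw [hDzB ω hω (m + 1) le_rfl,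
          Finset.sum_eq_zero fun s hs => by
            rw [hDzB ω hω s (le_trans (Finset.mem_Icc.mp hs).2 (by omega))]; ring]
        simp only [mul_zero, Real.exp_zero, one_mul, sub_zero, mul_one, zero_add]
      -- measurability and integrability of G
      have hGmH : Measurable[ℋ (m + 1)] G := by
        apply Measurable.mul
        · exact Real.measurable_exp.comp (measurable_const.mul
            (Finset.measurable_sum _ fun s hs =>
              measurable_const.mul (hDH s (m + 1) (le_trans (Finset.mem_Icc.mp hs).2 (by omega)))))
        · exact (measurable_const.mul (hDH (m + 1) (m + 1) le_rfl)).add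
            (measurable_const.mul (measurable_const.sub (hDH (m + 1) (m + 1) le_rfl)))
      have hGmeas : Measurable G := hGmH.mono (hm (m + 1)) le_rfl
      have hGint : Integrable G μ := by
        refine (integrable_const
          (Real.exp (|β (m + 2)| * ∑ s ∈ Finset.Icc 1 m, |z s - z (s + 1)|) *
            (Real.exp (β (m + 2) * z (m + 1)) + c))).mono' hGmeas.stronglyMeasurable.aestronglyMeasurable
          (Filter.Eventually.of_forall fun ω => ?_)
        rw [Real.norm_eq_abs]
        exact hshape (β (m + 2)) m (m + 1) _ _ (Real.exp_pos _) hcpos ω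
      have hFint2 : Integrable (Fdef β z h D (m + 2)) μ := hFint (m + 2) hh2
      -- the set-integral equality
      have hint_eq : ∀ A : Set Ω, MeasurableSet[ℋ (m + 1)] A →
          ∫ ω in A, G ω ∂μ = ∫ ω in A, Fdef β z h D (m + 2) ω ∂μ := by
        intro A hA
        have hAmeas : MeasurableSet A := hm (m + 1) A hA
        rcases hatom A hA with hdisj | hsub
        · refine setIntegral_congr_fun hAmeas fun ω hω => ?_
          have hωB : ω ∉ B := fun hc =>
            Set.eq_empty_iff_forall_notMem.mp hdisj ω ⟨hω, hc⟩
          have hτω : τ ω ≤ ((m + 1 : ℕ) : ℝ) := not_lt.mp hωB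
          exact (hFG ω hτω).symm
        · have hABm : MeasurableSet (A \ B) := hAmeas.diff hBmeas
          have hunion : (A \ B) ∪ B = A := by
            rw [Set.diff_union_self, Set.union_eq_self_of_subset_right hsub]
          have hdisjAB : Disjoint (A \ B) B := Set.disjoint_sdiff_left
          have hsplitG : ∫ ω in A, G ω ∂μ =
              (∫ ω in A \ B, G ω ∂μ) + ∫ ω in B, G ω ∂μ := by
            have hh := setIntegral_union hdisjAB hBmeas hGint.integrableOn
              (hGint.integrableOn (s := B))
            rwa [hunion] at hh
          have hsplitF : ∫ ω in A, Fdef β z h D (m + 2) ω ∂μ =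
              (∫ ω in A \ B, Fdef β z h D (m + 2) ω ∂μ) +
              ∫ ω in B, Fdef β z h D (m + 2) ω ∂μ := by
            have hh := setIntegral_union hdisjAB hBmeas hFint2.integrableOn
              (hFint2.integrableOn (s := B))
            rwa [hunion] at hh
          have hoff : ∫ ω in A \ B, G ω ∂μ = ∫ ω in A \ B, Fdef β z h D (m + 2) ω ∂μ := by
            refine setIntegral_congr_fun hABm fun ω hω => ?_
            exact (hFG ω (not_lt.mp hω.2)).symm
          -- now the integrals over B
          set B1 : Set Ω := {ω | ((m + 1 : ℕ) : ℝ) < τ ω ∧ τ ω ≤ ((m + 1 : ℕ) : ℝ) + 1}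
            with hB1def
          set B2 : Set Ω := {ω | ((m + 1 : ℕ) : ℝ) + 1 < τ ω} with hB2def
          have hB1meas : MeasurableSet B1 :=
            (measurableSet_lt measurable_const hτmeas).inter
              (measurableSet_le hτmeas measurable_const)
          have hB2meas : MeasurableSet B2 := measurableSet_lt measurable_const hτmeas
          have hBsplit : B1 ∪ B2 = B := by
            ext ω
            simp only [hB1def, hB2def, hBdef, Set.mem_union, Set.mem_setOf_eq]
            constructor
            · rintro (⟨h1, -⟩ | h1)
              · exact h1
              · linarith
            · intro h1
              rcases le_or_gt (τ ω) (((m + 1 : ℕ) : ℝ) + 1) with h2 | h2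
              · exact Or.inl ⟨h1, h2⟩
              · exact Or.inr h2
          have hB12 : Disjoint B1 B2 := by
            rw [Set.disjoint_iff_forall_ne]
            rintro ω ⟨-, h1⟩ ω' h2 rfl
            exact absurd h1 (not_le.mpr h2)
          have hintB_G : ∫ ω in B, G ω ∂μ = c * (μ B).toReal := by
            rw [setIntegral_congr_fun hBmeas (fun ω hω => hGB ω hω), setIntegral_const]
            rw [smul_eq_mul, measureReal_def]; ring
          have hintB_F : ∫ ω in B, Fdef β z h D (m + 2) ω ∂μ =
              Real.exp (β (m + 2) * z (m + 2)) * (μ B1).toReal +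
                h (m + 2) ^ (β (m + 2)) * (μ B2).toReal := by
            rw [← hBsplit,
              setIntegral_union hB12 hB2meas hFint2.integrableOn hFint2.integrableOn,
              setIntegral_congr_fun hB1meas (fun ω hω => hFB1 ω hω.1 hω.2),
              setIntegral_congr_fun hB2meas (fun ω hω => hFB2 ω hω),
              setIntegral_const, setIntegral_const, smul_eq_mul, smul_eq_mul,
              measureReal_def, measureReal_def]
            ring
          -- measure arithmetic
          have hμsplit : (μ B).toReal = (μ B1).toReal + (μ B2).toReal := by
            rw [← hBsplit, measure_union hB12 hB2meas,
              ENNReal.toReal_add (measure_ne_top μ _) (measure_ne_top μ _)]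
          have hμBpos : 0 < (μ B).toReal :=
            ENNReal.toReal_pos (ne_of_gt (hsurv (m + 1) hmlt)) (measure_ne_top μ _)
          have hqv : q (m + 1) = (μ B1).toReal / (μ B).toReal := hq (m + 1) hmlt
          have hpv : p (m + 1) = 1 - q (m + 1) := hp (m + 1) hmlt
          rw [hsplitG, hsplitF, hoff, hintB_G, hintB_F, hc, hqv, hpv, hqv]
          have hne : (μ B).toReal ≠ 0 := ne_of_gt hμBpos
          field_simp
          ring_nf
          linear_combination (h (2 + m) ^ β (2 + m)) * hμsplit
      -- conclude the conditional expectation computation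
      haveI : SigmaFinite (μ.trim (hm (m + 1))) := by
        have : IsFiniteMeasure (μ.trim (hm (m + 1))) := isFiniteMeasure_trim _
        infer_instance
      have hcond : G =ᵐ[μ] μ[Fdef β z h D (m + 2) | ℋ (m + 1)] :=
        ae_eq_condExp_of_forall_setIntegral_eq (hm (m + 1)) hFint2
          (fun s _ _ => hGint.integrableOn) (fun s hs _ => hint_eq s hs)
          (hGmH.stronglyMeasurable.aestronglyMeasurable)
      have hcond' : μ[L (m + 2) | ℋ (m + 1)] =ᵐ[μ] G :=
        (condExp_congr_ae hIH).trans hcond.symm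
      have hstepL := hLstep (m + 2) (Finset.mem_Icc.mpr ⟨by omega, hm2T⟩)
      rw [show m + 2 - 1 = m + 1 from rfl] at hstepL
      refine hstepL.trans ?_
      filter_upwards [hcond'] with ω hω
      rw [hω]
      -- pointwise : G ω ^ (β (m+1) / β (m+2)) = F (m+1) ω
      have hβ₂ne : β (m + 2) ≠ 0 := ne_of_gt hβ₂
      rcases hD01 (m + 1) ω with hd0 | hd1
      · simp only [hG, Fdef, hd0, show m + 1 - 1 = m from rfl]
        rw [show Real.exp (β (m + 2) * z (m + 1)) * 0 + c * (1 - 0) = c by ring,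
          show Real.exp (β (m + 1) * z (m + 1)) * 0 + h (m + 1) ^ β (m + 1) * (1 - 0) =
            h (m + 1) ^ β (m + 1) by ring]
        rw [Real.mul_rpow (le_of_lt (Real.exp_pos _)) (le_of_lt hcpos), ← Real.exp_mul]
        congr 1
        · congr 1; field_simp
        · rw [hh1, ← Real.rpow_mul (le_of_lt hcpos)]
          congr 1; field_simp
      · simp only [hG, Fdef, hd1, show m + 1 - 1 = m from rfl]
        rw [show Real.exp (β (m + 2) * z (m + 1)) * 1 + c * (1 - 1) =
            Real.exp (β (m + 2) * z (m + 1)) by ring,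
          show Real.exp (β (m + 1) * z (m + 1)) * 1 + h (m + 1) ^ β (m + 1) * (1 - 1) =
            Real.exp (β (m + 1) * z (m + 1)) by ring,
          ← Real.exp_add, ← Real.exp_add, ← Real.exp_mul]
        congr 1
        field_simp
  -- conclude
  constructor
  · have h1 := main (T - 1) 1 le_rfl (by omega)
    refine h1.trans (Filter.Eventually.of_forall fun ω => ?_)
    simp only [Fdef]
    rw [show (1 : ℕ) - 1 = 0 from rfl, Finset.Icc_eq_empty (by omega), Finset.sum_empty,
      mul_zero, Real.exp_zero, one_mul]
  · intro t ht
    obtain ⟨h2t, htT⟩ := Finset.mem_Icc.mp ht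
    exact main (T - t) t (by omega) (by omega)
end
end
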